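/- For any convex body K in R^n containing the origin, |conv(K ∪ (-K))| ≤ 2^n |K|. -/

import Mathlib

open MeasureTheory Set Pointwise
open scoped ENNReal

namespace RSproof

variable {n : ℕ}

local notation "X" => EuclideanSpace ℝ (Fin n)

lemma rs_smul_mono {W : Set X} (hWconv : Convex ℝ W) (h0W : (0:EuclideanSpace ℝ (Fin n)) ∈ W)
    {a b : ℝ} (ha : 0 ≤ a) (hab : a ≤ b) : a • W ⊆ b • W := by
  rcases eq_or_lt_of_le (ha.trans hab) with hb | hb
  · obtain rfl : b = 0 := hb.symm
    obtain rfl : a = 0 := le_antisymm hab ha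
    exact subset_rfl
  · rintro x ⟨w, hw, rfl⟩
    refine ⟨(a / b) • w, ?_, ?_⟩
    · have h1 : a / b + (1 - a / b) = 1 := by ring
      have h2 : 0 ≤ a / b := div_nonneg ha hb.le
      have h3 : 0 ≤ 1 - a / b := by
        have : a / b ≤ 1 := by
          rw [div_le_one hb]; exact hab
        linarith
      have := hWconv hw h0W h2 h3 h1
      simpa using this
    · show b • (a / b) • w = a • w
      rw [smul_smul]
      congr 1
      field_simp

noncomputable def hg (W : Set (EuclideanSpace ℝ (Fin n))) (z : EuclideanSpace ℝ (Fin n)) : ℝ :=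
  sInf ({t | t ∈ Icc (0:ℝ) 1 ∧ z ∈ t • W} ∪ {1})

lemma rs_bdd (W : Set X) (z : X) :
    BddBelow ({t | t ∈ Icc (0:ℝ) 1 ∧ z ∈ t • W} ∪ {1}) := by
  refine ⟨0, ?_⟩
  rintro t (⟨⟨h0, _⟩, _⟩ | h)
  · exact h0
  · rw [mem_singleton_iff] at h; rw [h]; exact zero_le_one

lemma rs_ne (W : Set X) (z : X) :
    ({t | t ∈ Icc (0:ℝ) 1 ∧ z ∈ t • W} ∪ {1}).Nonempty := ⟨1, Or.inr rfl⟩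

lemma hg_nonneg (W : Set X) (z : X) : 0 ≤ hg W z := by
  apply le_csInf (rs_ne W z)
  rintro t (⟨⟨h0, _⟩, _⟩ | h)
  · exact h0
  · rw [mem_singleton_iff] at h; rw [h]; exact zero_le_one

lemma hg_le_one (W : Set X) (z : X) : hg W z ≤ 1 := csInf_le (rs_bdd W z) (Or.inr rfl)

lemma hg_le {W : Set X} {z : X} {r : ℝ} (h0r : 0 ≤ r) (hr1 : r ≤ 1) (hz : z ∈ r • W) :
    hg W z ≤ r := csInf_le (rs_bdd W z) (Or.inl ⟨⟨h0r, hr1⟩, hz⟩)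

lemma rs_S_closed {W : Set X} (hWc : IsCompact W) (z : X) :
    IsClosed {t | t ∈ Icc (0:ℝ) 1 ∧ z ∈ t • W} := by
  have hT : IsCompact ((Icc (0:ℝ) 1 ×ˢ W) ∩ {p : ℝ × X | p.1 • p.2 = z}) :=
    (isCompact_Icc.prod hWc).inter_right
      (isClosed_eq (continuous_fst.smul continuous_snd) continuous_const)
  have himg : {t | t ∈ Icc (0:ℝ) 1 ∧ z ∈ t • W}
      = Prod.fst '' ((Icc (0:ℝ) 1 ×ˢ W) ∩ {p : ℝ × X | p.1 • p.2 = z}) := by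
    ext t
    constructor
    · rintro ⟨ht, w, hw, hwz⟩
      exact ⟨(t, w), ⟨⟨ht, hw⟩, hwz⟩, rfl⟩
    · rintro ⟨⟨t', w⟩, ⟨⟨ht, hw⟩, hwz⟩, rfl⟩
      exact ⟨ht, w, hw, hwz⟩
  rw [himg]
  exact (hT.image continuous_fst).isClosed

lemma hg_mem_smul {W : Set X} (hWc : IsCompact W) {z : X} (hz : z ∈ W) :
    z ∈ hg W z • W := by
  have hcl : IsClosed ({t | t ∈ Icc (0:ℝ) 1 ∧ z ∈ t • W} ∪ {1}) :=
    (rs_S_closed hWc z).union isClosed_singleton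
  have hmem := hcl.csInf_mem (rs_ne W z) (rs_bdd W z)
  rcases hmem with h | h
  · exact h.2
  · rw [mem_singleton_iff] at h
    refine ⟨z, hz, ?_⟩
    show hg W z • z = z
    rw [show hg W z = 1 from h, one_smul]

lemma hg_eq_one {W : Set X} (hWconv : Convex ℝ W) (h0W : (0:EuclideanSpace ℝ (Fin n)) ∈ W) {z : X} (hz : z ∉ W) :
    hg W z = 1 := by
  have hS : {t | t ∈ Icc (0:ℝ) 1 ∧ z ∈ t • W} = ∅ := by
    ext t
    simp only [mem_setOf_eq, mem_empty_iff_false, iff_false, not_and]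
    rintro ⟨h0t, ht1⟩ htz
    have h1 : z ∈ (1:ℝ) • W := rs_smul_mono hWconv h0W h0t ht1 htz
    rw [one_smul ℝ W] at h1
    exact hz h1
  rw [hg, hS, empty_union, csInf_singleton]

lemma hg_sublevel {W : Set X} (hWc : IsCompact W) (hWconv : Convex ℝ W) (h0W : (0:EuclideanSpace ℝ (Fin n)) ∈ W)
    {r : ℝ} (h0r : 0 ≤ r) (hr1 : r < 1) : {z : EuclideanSpace ℝ (Fin n) | hg W z ≤ r} = r • W := by
  ext z
  simp only [mem_setOf_eq]
  constructor
  · intro h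
    have hzW : z ∈ W := by
      by_contra hzW
      rw [hg_eq_one hWconv h0W hzW] at h
      linarith
    exact rs_smul_mono hWconv h0W (hg_nonneg W z) h (hg_mem_smul hWc hzW)
  · exact fun hz => hg_le h0r hr1.le hz

lemma hg_measurable {W : Set X} (hWc : IsCompact W) (hWconv : Convex ℝ W) (h0W : (0:EuclideanSpace ℝ (Fin n)) ∈ W) :
    Measurable (hg W) := by
  apply measurable_of_Iic
  intro r
  rcases lt_or_ge r 0 with hr | hr
  · have : hg W ⁻¹' Iic r = ∅ := by
      ext z
      simp only [mem_preimage, mem_Iic, mem_empty_iff_false, iff_false, not_le]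
      exact lt_of_lt_of_le hr (hg_nonneg W z)
    rw [this]; exact MeasurableSet.empty
  rcases lt_or_ge r 1 with hr1 | hr1
  · have : hg W ⁻¹' Iic r = r • W := hg_sublevel hWc hWconv h0W hr hr1
    rw [this]
    have : IsCompact (r • W) := by
      rw [show r • W = (fun x : X => r • x) '' W from (Set.image_smul).symm]
      exact hWc.image (continuous_const_smul r)
    exact this.isClosed.measurableSet
  · have : hg W ⁻¹' Iic r = univ := by
      ext z
      simp only [mem_preimage, mem_Iic, mem_univ, iff_true]
      exact le_trans (hg_le_one W z) hr1
    rw [this]; exact MeasurableSet.univ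


noncomputable def In (n : ℕ) : ℝ≥0∞ :=
  ∫⁻ t in Ioi (0:ℝ), ENNReal.ofReal (1 - t ^ ((n:ℝ)⁻¹)) ^ n

lemma rs_collapse {x : ℝ} (hx : 0 ≤ x) (hn : 0 < n) : (x ^ ((n:ℝ)⁻¹)) ^ n = x := by
  rw [← Real.rpow_natCast (x ^ ((n:ℝ)⁻¹)) n, ← Real.rpow_mul hx,
    inv_mul_cancel₀ (by exact_mod_cast hn.ne'), Real.rpow_one]

lemma rs_collapse' {x : ℝ} (hx : 0 ≤ x) (hn : 0 < n) : (x ^ n) ^ ((n:ℝ)⁻¹) = x := by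
  rw [← Real.rpow_natCast x n, ← Real.rpow_mul hx,
    mul_inv_cancel₀ (by exact_mod_cast hn.ne'), Real.rpow_one]

lemma LC (hn : 0 < n) {W : Set X} (hWc : IsCompact W) (hWconv : Convex ℝ W)
    (h0W : (0:EuclideanSpace ℝ (Fin n)) ∈ W) :
    ∫⁻ z : EuclideanSpace ℝ (Fin n), W.indicator (fun z => ENNReal.ofReal (1 - hg W z) ^ n) z
      = In n * volume W := by
  have hgm := hg_measurable hWc hWconv h0W
  set f : X → ℝ := fun z => W.indicator (fun z => (1 - hg W z) ^ n) z with hf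
  have hfm : Measurable f := ((measurable_const.sub hgm).pow_const n).indicator hWc.measurableSet
  have hfnn : ∀ z, 0 ≤ f z := by
    intro z
    apply indicator_nonneg
    intro z _
    exact pow_nonneg (by linarith [hg_le_one W z]) n
  have hf1 : ∀ z, f z ≤ 1 := by
    intro z
    by_cases hz : z ∈ W
    · rw [hf]; simp only [indicator_of_mem hz]
      exact pow_le_one₀ (by linarith [hg_le_one W z]) (by linarith [hg_nonneg W z])
    · rw [hf]; simp only [indicator_of_notMem hz]; exact zero_le_one
  have hlc := lintegral_eq_lintegral_meas_le volume (ae_of_all _ hfnn) hfm.aemeasurable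
  have hL : ∫⁻ z : EuclideanSpace ℝ (Fin n), W.indicator (fun z => ENNReal.ofReal (1 - hg W z) ^ n) z
      = ∫⁻ z : EuclideanSpace ℝ (Fin n), ENNReal.ofReal (f z) := by
    apply lintegral_congr
    intro z
    by_cases hz : z ∈ W
    · simp only [hf, indicator_of_mem hz]
      exact (ENNReal.ofReal_pow (by linarith [hg_le_one W z]) n).symm
    · simp [hf, indicator_of_notMem hz]
  rw [hL, hlc]
  have hae : ∀ᵐ t ∂(volume.restrict (Ioi (0:ℝ))), t ≠ 1 := by
    rw [ae_iff]
    have hset : {t : ℝ | ¬ t ≠ 1} = {1} := by ext t; simp [not_not]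
    rw [hset, Measure.restrict_apply (measurableSet_singleton 1)]
    exact measure_mono_null inter_subset_left Real.volume_singleton
  have heq : ∫⁻ t in Ioi (0:ℝ), volume {a : X | t ≤ f a}
      = ∫⁻ t in Ioi (0:ℝ), ENNReal.ofReal (1 - t ^ ((n:ℝ)⁻¹)) ^ n * volume W := by
    apply lintegral_congr_ae
    filter_upwards [hae, self_mem_ae_restrict measurableSet_Ioi] with t ht1 ht0
    have ht0' : (0:ℝ) < t := ht0
    rcases lt_or_ge t 1 with htlt | htgt
    · set r : ℝ := 1 - t ^ ((n:ℝ)⁻¹) with hr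
      have hrpos : 0 < r := by
        have : t ^ ((n:ℝ)⁻¹) < 1 := Real.rpow_lt_one ht0'.le htlt (by positivity)
        rw [hr]; linarith
      have hrlt : r < 1 := by
        have : 0 < t ^ ((n:ℝ)⁻¹) := Real.rpow_pos_of_pos ht0' _
        rw [hr]; linarith
      have hset : {a : X | t ≤ f a} = r • W := by
        rw [← hg_sublevel hWc hWconv h0W hrpos.le hrlt]
        ext a
        simp only [mem_setOf_eq]
        constructor
        · intro hta
          have haW : a ∈ W := by
            by_contra haW
            rw [hf] at hta
            simp only [indicator_of_notMem haW] at hta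
            linarith
          rw [hf] at hta
          simp only [indicator_of_mem haW] at hta
          have h1 : t ^ ((n:ℝ)⁻¹) ≤ ((1 - hg W a) ^ n) ^ ((n:ℝ)⁻¹) :=
            Real.rpow_le_rpow ht0'.le hta (by positivity)
          rw [rs_collapse' (by linarith [hg_le_one W a]) hn] at h1
          rw [hr]; linarith
        · intro hga
          have haW : a ∈ W := by
            by_contra haW
            rw [hg_eq_one hWconv h0W haW] at hga
            linarith
          rw [hf]
          simp only [indicator_of_mem haW]
          have h3 : t ^ ((n:ℝ)⁻¹) ≤ 1 - hg W a := by rw [hr] at hga; linarith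
          have h4 : (t ^ ((n:ℝ)⁻¹)) ^ n ≤ (1 - hg W a) ^ n :=
            pow_le_pow_left₀ (Real.rpow_nonneg ht0'.le _) h3 n
          rwa [rs_collapse ht0'.le hn] at h4
      rw [hset, Measure.addHaar_smul, finrank_euclideanSpace_fin,
        abs_of_nonneg (pow_nonneg hrpos.le n), ENNReal.ofReal_pow hrpos.le]
    · have hempty : {a : X | t ≤ f a} = ∅ := by
        ext a
        simp only [mem_setOf_eq, mem_empty_iff_false, iff_false, not_le]
        exact lt_of_le_of_lt (hf1 a) (lt_of_le_of_ne htgt (Ne.symm ht1))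
      have hge1 : (1:ℝ) ≤ t ^ ((n:ℝ)⁻¹) := by
        have := Real.rpow_le_rpow zero_le_one htgt (by positivity : (0:ℝ) ≤ (n:ℝ)⁻¹)
        rwa [Real.one_rpow] at this
      rw [hempty, measure_empty, ENNReal.ofReal_eq_zero.mpr (by linarith),
        zero_pow hn.ne', zero_mul]
  rw [heq, lintegral_mul_const' (volume W) _ hWc.measure_lt_top.ne]
  rfl

lemma In_ne_top (hn : 0 < n) : In n ≠ ⊤ := by
  have hb : In n ≤ ∫⁻ t in Ioi (0:ℝ), (Ioc (0:ℝ) 1).indicator (fun _ => 1) t := by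
    apply lintegral_mono_ae
    filter_upwards [self_mem_ae_restrict measurableSet_Ioi] with t ht0
    have ht0' : (0:ℝ) < t := ht0
    rcases le_or_gt t 1 with h1 | h1
    · rw [indicator_of_mem (by exact ⟨ht0', h1⟩ : t ∈ Ioc (0:ℝ) 1)]
      refine pow_le_one₀ (zero_le) (ENNReal.ofReal_le_one.mpr ?_)
      have := Real.rpow_nonneg ht0'.le ((n:ℝ)⁻¹)
      linarith
    · have hge1 : (1:ℝ) ≤ t ^ ((n:ℝ)⁻¹) := by
        have := Real.rpow_le_rpow zero_le_one h1.le (by positivity : (0:ℝ) ≤ (n:ℝ)⁻¹)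
        rwa [Real.one_rpow] at this
      rw [ENNReal.ofReal_eq_zero.mpr (by linarith), zero_pow hn.ne']
      exact zero_le
  refine ne_top_of_le_ne_top ?_ hb
  rw [lintegral_indicator measurableSet_Ioc, Measure.restrict_restrict measurableSet_Ioc]
  simp only [lintegral_const, Measure.restrict_apply MeasurableSet.univ, univ_inter]
  have : (Ioc (0:ℝ) 1 ∩ Ioi 0) = Ioc 0 1 := inter_eq_left.mpr (fun x hx => hx.1)
  rw [this, Real.volume_Ioc, one_mul]
  simp

lemma In_ne_zero (hn : 0 < n) : In n ≠ 0 := by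
  set c : ℝ := (2:ℝ)⁻¹ ^ n with hc
  have hcpos : 0 < c := by positivity
  have hb : (∫⁻ t in Ioi (0:ℝ), (Ioo (0:ℝ) c).indicator
      (fun _ => ENNReal.ofReal 2⁻¹ ^ n) t) ≤ In n := by
    apply lintegral_mono_ae
    filter_upwards [self_mem_ae_restrict measurableSet_Ioi] with t ht0
    have ht0' : (0:ℝ) < t := ht0
    by_cases htc : t ∈ Ioo (0:ℝ) c
    · rw [indicator_of_mem htc]
      apply pow_le_pow_left' ?_ n
      apply ENNReal.ofReal_le_ofReal
      have h1 : t ^ ((n:ℝ)⁻¹) ≤ ((2:ℝ)⁻¹ ^ n) ^ ((n:ℝ)⁻¹) :=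
        Real.rpow_le_rpow ht0'.le htc.2.le (by positivity)
      rw [rs_collapse' (by norm_num) hn] at h1
      linarith
    · rw [indicator_of_notMem htc]
      exact zero_le
  intro h0
  rw [h0] at hb
  have : (∫⁻ t in Ioi (0:ℝ), (Ioo (0:ℝ) c).indicator
      (fun _ => ENNReal.ofReal 2⁻¹ ^ n) t) = ENNReal.ofReal 2⁻¹ ^ n * ENNReal.ofReal c := by
    rw [lintegral_indicator measurableSet_Ioo, Measure.restrict_restrict measurableSet_Ioo]
    have : (Ioo (0:ℝ) c ∩ Ioi 0) = Ioo 0 c := inter_eq_left.mpr (fun x hx => hx.1)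
    simp only [lintegral_const, Measure.restrict_apply MeasurableSet.univ, univ_inter]
    rw [this, Real.volume_Ioo, sub_zero]
  rw [this] at hb
  have h1 : ENNReal.ofReal 2⁻¹ ^ n * ENNReal.ofReal c ≠ 0 :=
    mul_ne_zero (pow_ne_zero n (ENNReal.ofReal_pos.mpr (by norm_num)).ne')
      (ENNReal.ofReal_pos.mpr hcpos).ne'
  exact h1 (le_antisymm hb (zero_le))


end RSproof

open RSproof

theorem rogers_shephard_conv_hull (n : ℕ) (hn : 0 < n)
    (K : Set (EuclideanSpace ℝ (Fin n)))
    (hKc : IsCompact K) (hKconv : Convex ℝ K) (hKint : (interior K).Nonempty)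
    (h0 : (0 : EuclideanSpace ℝ (Fin n)) ∈ K) :
    volume (convexHull ℝ (K ∪ -K)) ≤ (2 : ℝ≥0∞) ^ n * volume K := by
  classical
  set C : Set (EuclideanSpace ℝ (Fin n)) := convexHull ℝ (K ∪ -K) with hC
  have hKneg : IsCompact (-K : Set (EuclideanSpace ℝ (Fin n))) := hKc.neg
  have h0neg : (0:EuclideanSpace ℝ (Fin n)) ∈ (-K : Set (EuclideanSpace ℝ (Fin n))) := by simpa using h0
  have hCeq : C = convexJoin ℝ K (-K) :=
    hKconv.convexHull_union hKconv.neg ⟨0, h0⟩ ⟨0, h0neg⟩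
  have hCc : IsCompact C := by
    rw [hCeq]
    have himg : convexJoin ℝ K (-K) =
        (fun p : ℝ × EuclideanSpace ℝ (Fin n) × EuclideanSpace ℝ (Fin n) => p.1 • p.2.1 + (1 - p.1) • p.2.2) ''
          (Icc (0:ℝ) 1 ×ˢ K ×ˢ (-K)) := by
      ext x
      rw [mem_convexJoin]
      constructor
      · rintro ⟨a, ha, b, hb, u, v, hu, hv, huv, rfl⟩
        refine ⟨(u, a, b), ⟨⟨hu, by linarith⟩, ha, hb⟩, ?_⟩
        simp only
        rw [show (1:ℝ) - u = v by linarith]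
      · rintro ⟨⟨u, a, b⟩, ⟨⟨hu0, hu1⟩, ha, hb⟩, rfl⟩
        exact ⟨a, ha, b, hb, u, 1 - u, hu0, by linarith, by ring, rfl⟩
    rw [himg]
    refine (isCompact_Icc.prod (hKc.prod hKneg)).image ?_
    fun_prop
  have hCconv : Convex ℝ C := convex_convexHull ℝ _
  have h0C : (0:EuclideanSpace ℝ (Fin n)) ∈ C := subset_convexHull ℝ _ (Or.inl h0)
  -- representation of points of C
  have hCrep : ∀ p ∈ C, ∃ μ : ℝ, μ ∈ Icc (0:ℝ) 1 ∧
      ∃ a ∈ K, ∃ b ∈ K, p = (1 - μ) • a - μ • b := by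
    intro p hp
    rw [hCeq, mem_convexJoin] at hp
    obtain ⟨a, ha, y, hy, u, v, hu, hv, huv, rfl⟩ := hp
    refine ⟨v, ⟨hv, by linarith⟩, a, ha, -y, ?_, ?_⟩
    · exact mem_neg.mp hy
    · rw [show (1:ℝ) - v = u by linarith, smul_neg, sub_neg_eq_add]
  -- the key set E
  set E : Set (EuclideanSpace ℝ (Fin n) × EuclideanSpace ℝ (Fin n)) :=
    (fun p : ℝ × EuclideanSpace ℝ (Fin n) × EuclideanSpace ℝ (Fin n) => ((1 - p.1) • p.2.2 - p.1 • p.2.1, (1 - p.1) • p.2.2)) ''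
      (Icc (0:ℝ) 1 ×ˢ K ×ˢ K) with hE
  have hEc : IsCompact E := by
    refine (isCompact_Icc.prod (hKc.prod hKc)).image ?_
    fun_prop
  have hEm : MeasurableSet E := hEc.isClosed.measurableSet
  have hEmem : ∀ z y : EuclideanSpace ℝ (Fin n), (z, y) ∈ E ↔
      ∃ l : ℝ, l ∈ Icc (0:ℝ) 1 ∧ y - z ∈ l • K ∧ y ∈ (1 - l) • K := by
    intro z y
    constructor
    · rintro ⟨⟨l, a, b⟩, ⟨hl, ha, hb⟩, heq⟩
      simp only [Prod.mk.injEq] at heq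
      obtain ⟨h1, h2⟩ := heq
      refine ⟨l, hl, ⟨a, ha, ?_⟩, ⟨b, hb, h2⟩⟩
      rw [← h1, ← h2]
      abel
    · rintro ⟨l, hl, ⟨a, ha, hya⟩, ⟨b, hb, hyb⟩⟩
      refine ⟨(l, a, b), ⟨hl, ha, hb⟩, ?_⟩
      simp only [Prod.mk.injEq]
      refine ⟨?_, hyb⟩
      have hyb' : (1 - l) • b = y := hyb
      have hya' : l • a = y - z := hya
      rw [hyb', hya']
      abel
  -- lower bound on z-fibers
  have hlow : ∀ z ∈ C,
      ENNReal.ofReal ((1 - hg C z) * 2⁻¹) ^ n * volume K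
        ≤ volume {y : EuclideanSpace ℝ (Fin n) | (z, y) ∈ E} := by
    intro z hzC
    have ht0 : 0 ≤ hg C z := hg_nonneg C z
    have ht1 : hg C z ≤ 1 := hg_le_one C z
    set t := hg C z with htdef
    obtain ⟨p, hpC, hpz⟩ := hg_mem_smul hCc hzC
    obtain ⟨μ, ⟨hμ0, hμ1⟩, a, ha, b, hb, hpeq⟩ := hCrep p hpC
    set s : ℝ := (1 - t) * 2⁻¹ with hsdef
    have hs0 : 0 ≤ s := by rw [hsdef]; nlinarith
    set u : EuclideanSpace ℝ (Fin n) := (t * (1 - μ)) • a with hu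
    have hpz' : t • p = z := hpz
    have hzeq : z = u - (t * μ) • b := by
      rw [hu, ← hpz', hpeq, smul_sub, smul_smul, smul_smul]
    have hsub : (fun w => u + w) '' (s • K) ⊆ {y : EuclideanSpace ℝ (Fin n) | (z, y) ∈ E} := by
      rintro _ ⟨w, hw, rfl⟩
      rw [mem_setOf_eq, hEmem]
      refine ⟨t * μ + s, ⟨add_nonneg (mul_nonneg ht0 hμ0) hs0, by rw [hsdef]; nlinarith⟩, ?_, ?_⟩
      · have hd : u + w - z = (t * μ) • b + w := by rw [hzeq]; abel
        rw [hd, hKconv.add_smul (mul_nonneg ht0 hμ0) hs0]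
        exact add_mem_add (smul_mem_smul_set hb) hw
      · have h1l : 1 - (t * μ + s) = t * (1 - μ) + s := by rw [hsdef]; ring
        rw [h1l, hKconv.add_smul (mul_nonneg ht0 (by linarith)) hs0]
        exact add_mem_add (smul_mem_smul_set ha) hw
    have himg : (fun w => u + w) '' (s • K) = u +ᵥ (s • K) := by
      ext x
      constructor
      · rintro ⟨w, hw, rfl⟩; exact ⟨w, hw, rfl⟩
      · rintro ⟨w, hw, rfl⟩; exact ⟨w, hw, rfl⟩
    have hv : volume ((fun w => u + w) '' (s • K))
        = ENNReal.ofReal ((1 - t) * 2⁻¹) ^ n * volume K := by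
      rw [himg, measure_vadd, Measure.addHaar_smul, finrank_euclideanSpace_fin,
        abs_of_nonneg (pow_nonneg hs0 n), ENNReal.ofReal_pow hs0]
    calc ENNReal.ofReal ((1 - t) * 2⁻¹) ^ n * volume K
        = volume ((fun w => u + w) '' (s • K)) := hv.symm
      _ ≤ volume {y : EuclideanSpace ℝ (Fin n) | (z, y) ∈ E} := measure_mono hsub
  -- upper bound on y-fibers
  have hup : ∀ y : EuclideanSpace ℝ (Fin n), volume {z : EuclideanSpace ℝ (Fin n) | (z, y) ∈ E}
      ≤ K.indicator (fun y => ENNReal.ofReal (1 - hg K y) ^ n) y * volume K := by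
    intro y
    by_cases hyK : y ∈ K
    · rw [indicator_of_mem hyK]
      set m : ℝ := 1 - hg K y with hm
      have hm0 : 0 ≤ m := by rw [hm]; linarith [hg_le_one K y]
      have hsub : {z : EuclideanSpace ℝ (Fin n) | (z, y) ∈ E} ⊆ y +ᵥ (-(m • K)) := by
        intro z hz
        rw [mem_setOf_eq, hEmem] at hz
        obtain ⟨l, ⟨hl0, hl1⟩, hyz, hy⟩ := hz
        have hgy : hg K y ≤ 1 - l := hg_le (by linarith) (by linarith) hy
        have hyzm : y - z ∈ m • K :=
          rs_smul_mono hKconv h0 hl0 (by rw [hm]; linarith) hyz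
        refine ⟨-(y - z), ?_, ?_⟩
        · rwa [mem_neg, neg_neg]
        · show y + -(y - z) = z
          abel
      calc volume {z : EuclideanSpace ℝ (Fin n) | (z, y) ∈ E} ≤ volume (y +ᵥ (-(m • K))) := measure_mono hsub
        _ = ENNReal.ofReal (1 - hg K y) ^ n * volume K := by
            rw [measure_vadd, Measure.measure_neg, Measure.addHaar_smul, finrank_euclideanSpace_fin,
              abs_of_nonneg (pow_nonneg hm0 n), ENNReal.ofReal_pow hm0]
    · have hempty : {z : EuclideanSpace ℝ (Fin n) | (z, y) ∈ E} = ∅ := by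
        ext z
        simp only [mem_setOf_eq, mem_empty_iff_false, iff_false]
        intro hz
        rw [hEmem] at hz
        obtain ⟨l, ⟨hl0, hl1⟩, _, hy⟩ := hz
        have : y ∈ (1:ℝ) • K :=
          rs_smul_mono hKconv h0 (by linarith) (by linarith) hy
        rw [one_smul ℝ K] at this
        exact hyK this
      rw [hempty]
      simp
  -- Tonelli
  have hprod : (volume : Measure (EuclideanSpace ℝ (Fin n) × EuclideanSpace ℝ (Fin n))) = (volume : Measure (EuclideanSpace ℝ (Fin n))).prod volume :=
    Measure.volume_eq_prod _ _
  have hE1 : volume E = ∫⁻ z : EuclideanSpace ℝ (Fin n), volume {y : EuclideanSpace ℝ (Fin n) | (z, y) ∈ E} := by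
    rw [hprod, Measure.prod_apply hEm]
    rfl
  have hE2 : volume E = ∫⁻ y : EuclideanSpace ℝ (Fin n), volume {z : EuclideanSpace ℝ (Fin n) | (z, y) ∈ E} := by
    rw [hprod, Measure.prod_apply_symm hEm]
    rfl
  -- combine
  have hKfin : volume K ≠ ⊤ := hKc.measure_lt_top.ne
  have hconst_fin : ENNReal.ofReal 2⁻¹ ^ n * volume K ≠ ⊤ :=
    ENNReal.mul_ne_top (ENNReal.pow_ne_top ENNReal.ofReal_ne_top) hKfin
  have hlow2 : In n * volume C * (ENNReal.ofReal 2⁻¹ ^ n * volume K) ≤ volume E := by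
    rw [hE1]
    have hpt : ∀ z : EuclideanSpace ℝ (Fin n),
        C.indicator (fun z => ENNReal.ofReal (1 - hg C z) ^ n) z
            * (ENNReal.ofReal 2⁻¹ ^ n * volume K)
          ≤ volume {y : EuclideanSpace ℝ (Fin n) | (z, y) ∈ E} := by
      intro z
      by_cases hzC : z ∈ C
      · rw [indicator_of_mem hzC]
        refine le_trans (le_of_eq ?_) (hlow z hzC)
        rw [← mul_assoc, ← mul_pow,
          ← ENNReal.ofReal_mul (by linarith [hg_le_one C z])]
      · rw [indicator_of_notMem hzC, zero_mul]
        exact zero_le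
    calc In n * volume C * (ENNReal.ofReal 2⁻¹ ^ n * volume K)
        = (∫⁻ z : EuclideanSpace ℝ (Fin n), C.indicator (fun z => ENNReal.ofReal (1 - hg C z) ^ n) z)
            * (ENNReal.ofReal 2⁻¹ ^ n * volume K) := by
          rw [LC hn hCc hCconv h0C]
      _ = ∫⁻ z : EuclideanSpace ℝ (Fin n), C.indicator (fun z => ENNReal.ofReal (1 - hg C z) ^ n) z
            * (ENNReal.ofReal 2⁻¹ ^ n * volume K) := by
          rw [lintegral_mul_const' _ _ hconst_fin]
      _ ≤ ∫⁻ z : EuclideanSpace ℝ (Fin n), volume {y : EuclideanSpace ℝ (Fin n) | (z, y) ∈ E} := lintegral_mono hpt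
  have hup2 : volume E ≤ In n * volume K * volume K := by
    rw [hE2]
    calc ∫⁻ y : EuclideanSpace ℝ (Fin n), volume {z : EuclideanSpace ℝ (Fin n) | (z, y) ∈ E}
        ≤ ∫⁻ y : EuclideanSpace ℝ (Fin n), K.indicator (fun y => ENNReal.ofReal (1 - hg K y) ^ n) y * volume K :=
          lintegral_mono hup
      _ = (∫⁻ y : EuclideanSpace ℝ (Fin n), K.indicator (fun y => ENNReal.ofReal (1 - hg K y) ^ n) y) * volume K := by
          rw [lintegral_mul_const' _ _ hKfin]
      _ = In n * volume K * volume K := by rw [LC hn hKc hKconv h0]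
  have hchain : In n * (volume C * (ENNReal.ofReal 2⁻¹ ^ n * volume K))
      ≤ In n * (volume K * volume K) := by
    calc In n * (volume C * (ENNReal.ofReal 2⁻¹ ^ n * volume K))
        = In n * volume C * (ENNReal.ofReal 2⁻¹ ^ n * volume K) := by ring
      _ ≤ volume E := hlow2
      _ ≤ In n * volume K * volume K := hup2
      _ = In n * (volume K * volume K) := by ring
  have h1 := (ENNReal.mul_le_mul_iff_right (In_ne_zero hn) (In_ne_top hn)).mp hchain
  have hKpos : volume K ≠ 0 := by
    have h2 : (0:ℝ≥0∞) < volume (interior K) := isOpen_interior.measure_pos volume hKint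
    exact (lt_of_lt_of_le h2 (measure_mono interior_subset)).ne'
  have h2 : volume C * ENNReal.ofReal 2⁻¹ ^ n ≤ volume K := by
    have h3 : volume C * ENNReal.ofReal 2⁻¹ ^ n * volume K ≤ volume K * volume K := by
      calc volume C * ENNReal.ofReal 2⁻¹ ^ n * volume K
          = volume C * (ENNReal.ofReal 2⁻¹ ^ n * volume K) := by ring
        _ ≤ volume K * volume K := h1
    exact (ENNReal.mul_le_mul_iff_left hKpos hKfin).mp h3
  have hof : ENNReal.ofReal 2⁻¹ = (2 : ℝ≥0∞)⁻¹ := by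
    rw [show ((2:ℝ)⁻¹) = 1/2 by norm_num]
    rw [ENNReal.ofReal_div_of_pos (by norm_num), ENNReal.ofReal_one, ENNReal.ofReal_ofNat]
    simp [one_div]
  rw [hof] at h2
  have hcancel : ((2:ℝ≥0∞)⁻¹) ^ n * (2:ℝ≥0∞) ^ n = 1 := by
    rw [← mul_pow, ENNReal.inv_mul_cancel (by norm_num) (by norm_num), one_pow]
  calc volume C = volume C * (((2:ℝ≥0∞)⁻¹) ^ n * (2:ℝ≥0∞) ^ n) := by
        rw [hcancel, mul_one]
    _ = volume C * ((2:ℝ≥0∞)⁻¹) ^ n * (2:ℝ≥0∞) ^ n := by ring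
    _ ≤ volume K * (2:ℝ≥0∞) ^ n := mul_le_mul_left h2 _
    _ = (2:ℝ≥0∞) ^ n * volume K := mul_comm _ _
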